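/- Let u₁¹ : (k₀, 1) → (π/2, π) be a differentiable function satisfying f_u(u₁¹(k), k) = 0, where f_u(u,k) = sin u·√(1 − k² sin² u) − cos u·(2E(u,k) − F(u,k)). Then u₁¹ is strictly decreasing, and lim_{k→1⁻} u₁¹(k) = π/2. -/

import Mathlib

open intervalIntegral Filter

/-- Incomplete elliptic integral of the first kind. -/
noncomputable def ellF (u k : ℝ) : ℝ :=
  ∫ t in (0:ℝ)..u, 1 / Real.sqrt (1 - k ^ 2 * Real.sin t ^ 2)

/-- Incomplete elliptic integral of the second kind. -/
noncomputable def ellE (u k : ℝ) : ℝ :=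
  ∫ t in (0:ℝ)..u, Real.sqrt (1 - k ^ 2 * Real.sin t ^ 2)

/-- The function `f_u(u,k) = sin u·√(1 − k² sin²u) − cos u·(2E(u,k) − F(u,k))`. -/
noncomputable def fu (u k : ℝ) : ℝ :=
  Real.sin u * Real.sqrt (1 - k ^ 2 * Real.sin u ^ 2)
    - Real.cos u * (2 * ellE u k - ellF u k)

lemma arg_pos {k : ℝ} (hk : k ^ 2 < 1) (t : ℝ) : 0 < 1 - k ^ 2 * Real.sin t ^ 2 := by
  nlinarith [Real.sin_sq_le_one t, sq_nonneg k, sq_nonneg (Real.sin t)]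

lemma contE (k : ℝ) : Continuous fun t => Real.sqrt (1 - k ^ 2 * Real.sin t ^ 2) :=
  (continuous_const.sub (continuous_const.mul (Real.continuous_sin.pow 2))).sqrt

lemma contF {k : ℝ} (hk : k ^ 2 < 1) :
    Continuous fun t => 1 / Real.sqrt (1 - k ^ 2 * Real.sin t ^ 2) :=
  continuous_const.div (contE k) fun t =>
    (Real.sqrt_pos.2 (arg_pos hk t)).ne'

lemma hasDerivAt_ellE (k u : ℝ) :
    HasDerivAt (fun v => ellE v k) (Real.sqrt (1 - k ^ 2 * Real.sin u ^ 2)) u :=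
  intervalIntegral.integral_hasDerivAt_right ((contE k).intervalIntegrable 0 u)
    ((contE k).stronglyMeasurableAtFilter _ _) (contE k).continuousAt

lemma hasDerivAt_ellF {k : ℝ} (hk : k ^ 2 < 1) (u : ℝ) :
    HasDerivAt (fun v => ellF v k) (1 / Real.sqrt (1 - k ^ 2 * Real.sin u ^ 2)) u :=
  intervalIntegral.integral_hasDerivAt_right ((contF hk).intervalIntegrable 0 u)
    ((contF hk).stronglyMeasurableAtFilter _ _) (contF hk).continuousAt

noncomputable def hfun (u k : ℝ) : ℝ :=
  2 * ellE u k - ellF u k - Real.tan u * Real.sqrt (1 - k ^ 2 * Real.sin u ^ 2)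

lemma fu_eq_hfun {u k : ℝ} (hc : Real.cos u ≠ 0) : fu u k = -Real.cos u * hfun u k := by
  unfold fu hfun
  rw [Real.tan_eq_sin_div_cos]
  field_simp
  ring

lemma hasDerivAt_hfun {k : ℝ} (hk : k ^ 2 < 1) {u : ℝ} (hc : Real.cos u ≠ 0) :
    HasDerivAt (fun v => hfun v k)
      (-(Real.sqrt (1 - k ^ 2 * Real.sin u ^ 2) * Real.tan u ^ 2)) u := by
  have hS : 0 < Real.sqrt (1 - k ^ 2 * Real.sin u ^ 2) := Real.sqrt_pos.2 (arg_pos hk u)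
  have hinner : HasDerivAt (fun v => 1 - k ^ 2 * Real.sin v ^ 2)
      (-(k ^ 2 * (2 * Real.sin u * Real.cos u))) u := by
    have h1 : HasDerivAt (fun v => Real.sin v ^ 2) (2 * Real.sin u * Real.cos u) u := by
      simpa [mul_comm, pow_two] using (Real.hasDerivAt_sin u).fun_pow 2
    simpa using (h1.const_mul (k ^ 2)).const_sub 1
  have hsq : HasDerivAt (fun v => Real.sqrt (1 - k ^ 2 * Real.sin v ^ 2))
      (-(k ^ 2 * (2 * Real.sin u * Real.cos u)) / (2 * Real.sqrt (1 - k ^ 2 * Real.sin u ^ 2))) u :=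
    hinner.sqrt (arg_pos hk u).ne'
  have htan : HasDerivAt Real.tan (1 / Real.cos u ^ 2) u := Real.hasDerivAt_tan hc
  have h := (((hasDerivAt_ellE k u).const_mul 2).sub (hasDerivAt_ellF hk u)).sub
    (htan.mul hsq)
  convert h using 1
  · rfl
  · rfl
  · rfl
  have hS2 : Real.sqrt (1 - k ^ 2 * Real.sin u ^ 2) ^ 2 = 1 - k ^ 2 * Real.sin u ^ 2 :=
    Real.sq_sqrt (arg_pos hk u).le
  rw [Real.tan_eq_sin_div_cos]
  have hsc : Real.sin u ^ 2 = 1 - Real.cos u ^ 2 := by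
    have := Real.sin_sq_add_cos_sq u; linarith
  field_simp
  linear_combination (1 - Real.sin u ^ 2 - 2 * Real.cos u ^ 2) * hS2 -
    (1 - k ^ 2 * Real.sin u ^ 2) * hsc

lemma cos_neg_on {u : ℝ} (hu : u ∈ Set.Ioo (Real.pi / 2) Real.pi) : Real.cos u < 0 :=
  Real.cos_neg_of_pi_div_two_lt_of_lt hu.1 (by linarith [hu.2, Real.pi_pos])

lemma sin_pos_on {u : ℝ} (hu : u ∈ Set.Ioo (Real.pi / 2) Real.pi) : 0 < Real.sin u :=
  Real.sin_pos_of_pos_of_lt_pi (by linarith [hu.1, Real.pi_pos]) hu.2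

lemma tan_neg_on {u : ℝ} (hu : u ∈ Set.Ioo (Real.pi / 2) Real.pi) : Real.tan u < 0 := by
  rw [Real.tan_eq_sin_div_cos]
  exact div_neg_of_pos_of_neg (sin_pos_on hu) (cos_neg_on hu)

lemma hfun_strictAnti {k : ℝ} (hk0 : 0 ≤ k) (hk : k < 1) :
    StrictAntiOn (fun u => hfun u k) (Set.Ioo (Real.pi / 2) Real.pi) := by
  have hk2 : k ^ 2 < 1 := by nlinarith
  apply strictAntiOn_of_deriv_neg (convex_Ioo _ _)
  · intro x hx
    exact ((hasDerivAt_hfun hk2 (cos_neg_on hx).ne).differentiableAt.continuousAt).continuousWithinAt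
  · intro x hx
    rw [interior_Ioo] at hx
    rw [(hasDerivAt_hfun hk2 (cos_neg_on hx).ne).deriv]
    have hS : 0 < Real.sqrt (1 - k ^ 2 * Real.sin x ^ 2) := Real.sqrt_pos.2 (arg_pos hk2 x)
    have ht : Real.tan x < 0 := tan_neg_on hx
    have : 0 < Real.tan x ^ 2 := pow_two_pos_of_ne_zero ht.ne
    nlinarith

lemma hfun_k_lt {u k k' : ℝ} (hu : u ∈ Set.Ioo (Real.pi / 2) Real.pi)
    (hk0 : 0 < k) (hkk : k < k') (hk1 : k' < 1) : hfun u k' < hfun u k := by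
  have hk2 : k ^ 2 < 1 := by nlinarith
  have hk'2 : k' ^ 2 < 1 := by nlinarith
  have hkk2 : k ^ 2 < k' ^ 2 := by nlinarith
  have hsinu : 0 < Real.sin u := sin_pos_on hu
  have hu0 : (0:ℝ) ≤ u := by nlinarith [hu.1, Real.pi_pos]
  have hE : ellE u k' ≤ ellE u k := by
    apply intervalIntegral.integral_mono_on hu0 ((contE k').intervalIntegrable 0 u)
      ((contE k).intervalIntegrable 0 u)
    intro t _
    exact Real.sqrt_le_sqrt (by nlinarith [sq_nonneg (Real.sin t)])
  have hF : ellF u k ≤ ellF u k' := by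
    apply intervalIntegral.integral_mono_on hu0 ((contF hk2).intervalIntegrable 0 u)
      ((contF hk'2).intervalIntegrable 0 u)
    intro t _
    apply one_div_le_one_div_of_le (Real.sqrt_pos.2 (arg_pos hk'2 t))
    exact Real.sqrt_le_sqrt (by nlinarith [sq_nonneg (Real.sin t)])
  have hs : Real.sqrt (1 - k' ^ 2 * Real.sin u ^ 2) < Real.sqrt (1 - k ^ 2 * Real.sin u ^ 2) := by
    apply Real.sqrt_lt_sqrt (arg_pos hk'2 u).le
    nlinarith [mul_pos (sub_pos.2 hkk2) (mul_pos hsinu hsinu)]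
  have htan : Real.tan u < 0 := tan_neg_on hu
  have hP : 0 < (-Real.tan u) * (Real.sqrt (1 - k ^ 2 * Real.sin u ^ 2)
      - Real.sqrt (1 - k' ^ 2 * Real.sin u ^ 2)) :=
    mul_pos (by linarith) (by linarith)
  unfold hfun
  nlinarith

lemma ellE_le_self {u k : ℝ} (hu : 0 ≤ u) : ellE u k ≤ u := by
  have h1 : ellE u k ≤ ∫ t in (0:ℝ)..u, (1:ℝ) := by
    apply intervalIntegral.integral_mono_on hu ((contE k).intervalIntegrable 0 u)
      (intervalIntegrable_const)
    intro t _
    refine Real.sqrt_le_one.2 ?_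
    nlinarith [sq_nonneg (k * Real.sin t)]
  simpa using h1

lemma ellF_half_lower {k : ℝ} (hk0 : 0 < k) (hk1 : k < 1) :
    Real.arsinh (Real.pi / 2 / Real.sqrt (1 - k ^ 2)) ≤ ellF (Real.pi / 2) k := by
  have hk2 : k ^ 2 < 1 := by nlinarith
  set a := Real.sqrt (1 - k ^ 2) with ha
  have ha0 : 0 < a := Real.sqrt_pos.2 (by nlinarith)
  have ha2 : a ^ 2 = 1 - k ^ 2 := Real.sq_sqrt (by nlinarith)
  have hpos : ∀ t : ℝ, 0 < a ^ 2 + (t - Real.pi / 2) ^ 2 := fun t => by positivity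
  have hG : ∀ t : ℝ, HasDerivAt (fun t => Real.arsinh ((t - Real.pi / 2) / a))
      (1 / Real.sqrt (a ^ 2 + (t - Real.pi / 2) ^ 2)) t := by
    intro t
    have h1 : HasDerivAt (fun t : ℝ => (t - Real.pi / 2) / a) (1 / a) t := by
      simpa using ((hasDerivAt_id t).sub_const (Real.pi / 2)).div_const a
    have h2 := h1.arsinh
    convert h2 using 1
    have key : Real.sqrt (1 + ((t - Real.pi / 2) / a) ^ 2)
        = Real.sqrt (a ^ 2 + (t - Real.pi / 2) ^ 2) / a := by
      rw [show 1 + ((t - Real.pi / 2) / a) ^ 2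
          = (a ^ 2 + (t - Real.pi / 2) ^ 2) / a ^ 2 by field_simp]
      rw [Real.sqrt_div (hpos t).le, Real.sqrt_sq ha0.le]
    rw [smul_eq_mul, key]
    have hsp : 0 < Real.sqrt (a ^ 2 + (t - Real.pi / 2) ^ 2) := Real.sqrt_pos.2 (hpos t)
    field_simp
  have hcontG : Continuous fun t : ℝ => 1 / Real.sqrt (a ^ 2 + (t - Real.pi / 2) ^ 2) := by
    apply continuous_const.div
    · exact (continuous_const.add ((continuous_id.sub continuous_const).pow 2)).sqrt
    · exact fun t => (Real.sqrt_pos.2 (hpos t)).ne'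
  have hint : ∫ t in (0:ℝ)..(Real.pi / 2), 1 / Real.sqrt (a ^ 2 + (t - Real.pi / 2) ^ 2)
      = Real.arsinh (Real.pi / 2 / a) := by
    rw [intervalIntegral.integral_eq_sub_of_hasDerivAt (fun t _ => hG t)
      (hcontG.intervalIntegrable _ _)]
    have : ((0:ℝ) - Real.pi / 2) / a = -(Real.pi / 2 / a) := by ring
    rw [this, Real.arsinh_neg]
    simp
  rw [← hint]
  unfold ellF
  apply intervalIntegral.integral_mono_on (by positivity) (hcontG.intervalIntegrable 0 _)
    ((contF hk2).intervalIntegrable 0 _)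
  intro t _
  apply one_div_le_one_div_of_le (Real.sqrt_pos.2 (arg_pos hk2 t))
  apply Real.sqrt_le_sqrt
  -- 1 - k^2 sin^2 t ≤ a^2 + (t - π/2)^2  ⟸  k^2 cos^2 t ≤ (t - π/2)^2
  have hcs : Real.cos t ^ 2 ≤ (t - Real.pi / 2) ^ 2 := by
    have h1 : |Real.cos t| ≤ |t - Real.pi / 2| := by
      rw [← Real.sin_pi_div_two_sub t]
      calc |Real.sin (Real.pi / 2 - t)| ≤ |Real.pi / 2 - t| := Real.abs_sin_le_abs
        _ = |t - Real.pi / 2| := abs_sub_comm _ _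
    calc Real.cos t ^ 2 = |Real.cos t| ^ 2 := (sq_abs _).symm
      _ ≤ |t - Real.pi / 2| ^ 2 := by nlinarith [abs_nonneg (Real.cos t)]
      _ = (t - Real.pi / 2) ^ 2 := sq_abs _
  have hst : Real.sin t ^ 2 + Real.cos t ^ 2 = 1 := Real.sin_sq_add_cos_sq t
  nlinarith [sq_nonneg (Real.cos t), sq_nonneg k]

lemma ellF_mono_u {k u : ℝ} (hk2 : k ^ 2 < 1) (hu : Real.pi / 2 ≤ u) :
    ellF (Real.pi / 2) k ≤ ellF u k := by
  have hsplit : ellF (Real.pi / 2) k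
      + ∫ t in (Real.pi / 2)..u, 1 / Real.sqrt (1 - k ^ 2 * Real.sin t ^ 2) = ellF u k :=
    intervalIntegral.integral_add_adjacent_intervals
      ((contF hk2).intervalIntegrable _ _) ((contF hk2).intervalIntegrable _ _)
  have hnn : 0 ≤ ∫ t in (Real.pi / 2)..u, 1 / Real.sqrt (1 - k ^ 2 * Real.sin t ^ 2) :=
    intervalIntegral.integral_nonneg hu fun t _ => by positivity
  linarith

lemma tendsto_arsinh_atTop : Tendsto Real.arsinh atTop atTop := by
  rw [tendsto_atTop_atTop]
  intro b
  refine ⟨Real.sinh b, fun x hx => ?_⟩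
  have := Real.arsinh_strictMono.monotone hx
  rwa [Real.arsinh_sinh] at this

lemma tendsto_bound : Tendsto (fun k : ℝ => Real.arsinh (Real.pi / 2 / Real.sqrt (1 - k ^ 2)))
    (nhdsWithin 1 (Set.Iio 1)) atTop := by
  apply tendsto_arsinh_atTop.comp
  have h1 : Tendsto (fun k : ℝ => Real.sqrt (1 - k ^ 2)) (nhdsWithin 1 (Set.Iio 1))
      (nhdsWithin 0 (Set.Ioi 0)) := by
    rw [tendsto_nhdsWithin_iff]
    constructor
    · have : Tendsto (fun k : ℝ => Real.sqrt (1 - k ^ 2)) (nhds 1) (nhds 0) := by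
        have hc : Continuous fun k : ℝ => Real.sqrt (1 - k ^ 2) :=
          (continuous_const.sub (continuous_pow 2)).sqrt
        have := hc.tendsto 1
        simpa using this
      exact this.mono_left nhdsWithin_le_nhds
    · filter_upwards [Ioo_mem_nhdsLT_of_mem (Set.mem_Ioc.2 ⟨zero_lt_one, le_refl (1:ℝ)⟩)]
        with k hk
      exact Real.sqrt_pos.2 (by nlinarith [hk.1, hk.2])
  have h2 : Tendsto (fun x : ℝ => Real.pi / 2 / x) (nhdsWithin 0 (Set.Ioi 0)) atTop := by
    simp only [div_eq_mul_inv]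
    exact Tendsto.const_mul_atTop (by positivity) tendsto_inv_nhdsGT_zero
  exact h2.comp h1

lemma tan_mono_on {x y : ℝ} (hx : x ∈ Set.Ioo (Real.pi / 2) Real.pi)
    (hy : y ∈ Set.Ioo (Real.pi / 2) Real.pi) (hxy : x ≤ y) : Real.tan x ≤ Real.tan y := by
  have hx' : x - Real.pi ∈ Set.Ioo (-(Real.pi / 2)) (Real.pi / 2) := by
    constructor <;> [linarith [hx.1]; linarith [hx.2, Real.pi_pos]]
  have hy' : y - Real.pi ∈ Set.Ioo (-(Real.pi / 2)) (Real.pi / 2) := by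
    constructor <;> [linarith [hy.1]; linarith [hy.2, Real.pi_pos]]
  calc Real.tan x = Real.tan (x - Real.pi) := (Real.tan_periodic.sub_eq x).symm
    _ ≤ Real.tan (y - Real.pi) :=
        Real.strictMonoOn_tan.monotoneOn hx' hy' (by linarith)
    _ = Real.tan y := Real.tan_periodic.sub_eq y

/-- Let `u₁¹ : (k₀, 1) → (π/2, π)` be a differentiable function satisfying
`f_u(u₁¹(k), k) = 0`. Then `u₁¹` is strictly decreasing on `(k₀, 1)` and
`u₁¹(k) → π/2` as `k → 1⁻`. -/
theorem u11_decreasing_and_limit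
    (k₀ : ℝ) (hk₀ : k₀ ∈ Set.Ioo (0:ℝ) 1)
    (u₁ : ℝ → ℝ)
    (hmaps : ∀ k ∈ Set.Ioo k₀ 1, u₁ k ∈ Set.Ioo (Real.pi / 2) Real.pi)
    (hdiff : DifferentiableOn ℝ u₁ (Set.Ioo k₀ 1))
    (hroot : ∀ k ∈ Set.Ioo k₀ 1, fu (u₁ k) k = 0) :
    StrictAntiOn u₁ (Set.Ioo k₀ 1) ∧
      Tendsto u₁ (nhdsWithin 1 (Set.Iio 1)) (nhds (Real.pi / 2)) := by
  obtain ⟨hk₀0, hk₀1⟩ := hk₀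
  have hzero : ∀ k ∈ Set.Ioo k₀ 1, hfun (u₁ k) k = 0 := by
    intro k hk
    have hu := hmaps k hk
    have hc : Real.cos (u₁ k) < 0 := cos_neg_on hu
    have h := hroot k hk
    rw [fu_eq_hfun hc.ne] at h
    rcases mul_eq_zero.1 h with h' | h'
    · exact absurd h' (by simpa using hc.ne)
    · exact h'
  have hanti : StrictAntiOn u₁ (Set.Ioo k₀ 1) := by
    intro k hk k' hk' hlt
    have hu := hmaps k hk
    have hu' := hmaps k' hk'
    have hk0 : 0 < k := lt_trans hk₀0 hk.1
    have hgt : 0 < hfun (u₁ k') k := by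
      have h1 := hfun_k_lt hu' hk0 hlt hk'.2
      have h0' := hzero k' hk'
      linarith
    by_contra hle
    push_neg at hle
    rcases eq_or_lt_of_le hle with heq | hlt2
    · rw [← heq, hzero k hk] at hgt
      exact lt_irrefl 0 hgt
    · have h2 := hfun_strictAnti hk0.le hk.2 hu hu' hlt2
      simp only at h2
      rw [hzero k hk] at h2
      linarith
  refine ⟨hanti, ?_⟩
  rw [Metric.tendsto_nhds]
  intro ε hε
  set δ := min ε (Real.pi / 2) / 2 with hδdef
  have hπ := Real.pi_pos
  have hδ0 : 0 < δ := by
    have : 0 < min ε (Real.pi / 2) := lt_min hε (by linarith)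
    positivity
  have hδle : δ ≤ Real.pi / 4 := by
    have : min ε (Real.pi / 2) ≤ Real.pi / 2 := min_le_right _ _
    rw [hδdef]; linarith
  have hδε : δ ≤ ε / 2 := by
    have : min ε (Real.pi / 2) ≤ ε := min_le_left _ _
    rw [hδdef]; linarith
  set L := Real.pi / 2 + δ with hLdef
  have hL1 : Real.pi / 2 < L := by rw [hLdef]; linarith
  have hL2 : L < Real.pi := by rw [hLdef]; linarith
  have hE2 : ∀ᶠ k in nhdsWithin 1 (Set.Iio 1),
      2 * Real.pi - Real.tan L < Real.arsinh (Real.pi / 2 / Real.sqrt (1 - k ^ 2)) :=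
    tendsto_bound.eventually_gt_atTop _
  have hE1 : ∀ᶠ k in nhdsWithin 1 (Set.Iio 1), k ∈ Set.Ioo k₀ 1 :=
    Ioo_mem_nhdsLT_of_mem (Set.mem_Ioc.2 ⟨hk₀1, le_refl 1⟩)
  filter_upwards [hE1, hE2] with k hk hB
  have hu := hmaps k hk
  have hk0 : 0 < k := lt_trans hk₀0 hk.1
  have hk2 : k ^ 2 < 1 := by nlinarith [hk.2]
  have hult : u₁ k < L := by
    by_contra hge
    push_neg at hge
    set u := u₁ k with hudef
    have h0 := hzero k hk
    have huπ : u < Real.pi := hu.2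
    have hu0 : (0:ℝ) ≤ u := by nlinarith [hu.1]
    have hE_le : ellE u k ≤ u := ellE_le_self hu0
    have hF_ge : Real.arsinh (Real.pi / 2 / Real.sqrt (1 - k ^ 2)) ≤ ellF u k :=
      le_trans (ellF_half_lower hk0 hk.2) (ellF_mono_u hk2 (le_trans hL1.le hge))
    have htanm : Real.tan L ≤ Real.tan u := tan_mono_on ⟨hL1, hL2⟩ hu hge
    have htu : Real.tan u < 0 := tan_neg_on hu
    have hS1 : Real.sqrt (1 - k ^ 2 * Real.sin u ^ 2) ≤ 1 :=
      Real.sqrt_le_one.2 (by nlinarith [sq_nonneg (k * Real.sin u)])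
    have hS0 : 0 ≤ Real.sqrt (1 - k ^ 2 * Real.sin u ^ 2) := Real.sqrt_nonneg _
    have ht2 : -(Real.tan u * Real.sqrt (1 - k ^ 2 * Real.sin u ^ 2)) ≤ -Real.tan u := by
      nlinarith
    have hneg : hfun u k < 0 := by
      unfold hfun
      linarith
    rw [h0] at hneg
    exact lt_irrefl 0 hneg
  have hgt' : Real.pi / 2 < u₁ k := hu.1
  rw [Real.dist_eq, abs_of_pos (by linarith)]
  rw [hLdef] at hult
  linarith
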